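/- Suppose the symbol of L^p satisfies: there exist C, λ > 0 with max_{j=1,…,n}|η_j + p_j(ξ)| ≥ C(|(η,ξ)|)^{−λ} whenever this max is nonzero. If (f̂(η,ξ)) is a rapidly decreasing family of (p+1)-covectors indexed by (η,ξ) ∈ Z^{n+N} satisfying L̂(η,ξ) ∧ f̂(η,ξ) = 0, where L̂(η,ξ) = i Σ_j (η_j + p_j(ξ)) dt_j, then for each (η,ξ) with L̂(η,ξ) ≠ 0 the covector û(η,ξ) = (1/i) Σ_{|K|=p+1, μ∈K} (-1)^{sign(μ,K∖μ)} (η_μ + p_μ(ξ))^{-1} f̂_K(η,ξ) dt_{K∖{μ}} (with μ chosen so |η_μ + p_μ(ξ)| is the maximum) satisfies L̂(η,ξ) ∧ û(η,ξ) = f̂(η,ξ) and the family (û(η,ξ)) is rapidly decreasing. -/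

import Mathlib

open Finset

/-- The basis covector `dt_j` in the exterior algebra of `ℂ^n`. -/
noncomputable def dt (n : ℕ) (j : Fin n) : ExteriorAlgebra ℂ (Fin n → ℂ) :=
  ExteriorAlgebra.ι ℂ (Pi.single j (1 : ℂ))

/-- The basis wedge `dt_K` over an increasingly sorted multi-index `K`. -/
noncomputable def dtW (n : ℕ) (K : Finset (Fin n)) : ExteriorAlgebra ℂ (Fin n → ℂ) :=
  ((K.sort (· ≤ ·)).map (dt n)).prod

/-- under the Diophantine lower bound on the symbol
`L̂(η,ξ) = i Σ_j (η_j + p_j(ξ)) dt_j`, given a rapidly decreasing family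
`f̂(η,ξ)` of `(p+1)`-covectors with `L̂(η,ξ) ∧ f̂(η,ξ) = 0`, the explicitly
defined covectors `û(η,ξ)` (using an index `μ` attaining
`max_j |η_j + p_j(ξ)|`) satisfy `L̂(η,ξ) ∧ û(η,ξ) = f̂(η,ξ)` for all `(η,ξ)`
with `L̂(η,ξ) ≠ 0`, and the family `û` is rapidly decreasing there. -/

lemma contract_prod_not_mem (n : ℕ) (μ : Fin n) (l : List (Fin n)) (h : μ ∉ l) :
    CliffordAlgebra.contractLeft (LinearMap.proj μ : (Fin n → ℂ) →ₗ[ℂ] ℂ)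
      ((l.map (dt n)).prod) = 0 := by
  induction l with
  | nil => simp
  | cons a t ih =>
    simp only [List.mem_cons, not_or] at h
    simp only [List.map_cons, List.prod_cons, dt,
      CliffordAlgebra.contractLeft_ι_mul, ih h.2, mul_zero, sub_zero]
    have : (LinearMap.proj μ : (Fin n → ℂ) →ₗ[ℂ] ℂ) (Pi.single a 1) = 0 := by
      simp [LinearMap.proj_apply, Pi.single_apply, Ne.symm h.1]
    rw [this, zero_smul]

lemma contract_prod_mem (n : ℕ) (μ : Fin n) (l : List (Fin n))
    (hs : l.Pairwise (· < ·)) (h : μ ∈ l) :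
    CliffordAlgebra.contractLeft (LinearMap.proj μ : (Fin n → ℂ) →ₗ[ℂ] ℂ)
      ((l.map (dt n)).prod) =
    ((-1 : ℂ) ^ (l.countP (fun k => decide (k < μ)))) •
      (((l.erase μ).map (dt n)).prod) := by
  induction l with
  | nil => simp at h
  | cons a t ih =>
    rcases List.mem_cons.mp h with rfl | hμt
    · have hnt : μ ∉ t := fun hm => lt_irrefl μ ((List.pairwise_cons.mp hs).1 μ hm)
      simp only [List.map_cons, List.prod_cons, dt, CliffordAlgebra.contractLeft_ι_mul,
        contract_prod_not_mem n μ t hnt, mul_zero, sub_zero]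
      have h1 : (LinearMap.proj μ : (Fin n → ℂ) →ₗ[ℂ] ℂ) (Pi.single μ 1) = 1 := by
        simp [LinearMap.proj_apply]
      rw [h1, List.erase_cons_head]
      have hc : (μ :: t).countP (fun k => decide (k < μ)) = 0 := by
        rw [List.countP_eq_zero]
        intro k hk
        simp only [decide_eq_true_eq]
        rcases List.mem_cons.mp hk with rfl | hk'
        · exact lt_irrefl _
        · exact fun hlt => absurd ((List.pairwise_cons.mp hs).1 k hk') (not_lt.mpr hlt.le)
      rw [hc]
      simp
    · have haμ : a < μ := (List.pairwise_cons.mp hs).1 μ hμt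
      simp only [List.map_cons, List.prod_cons, dt, CliffordAlgebra.contractLeft_ι_mul,
        ih (List.pairwise_cons.mp hs).2 hμt]
      have h0 : (LinearMap.proj μ : (Fin n → ℂ) →ₗ[ℂ] ℂ) (Pi.single a 1) = 0 := by
        simp [LinearMap.proj_apply, Pi.single_apply, (ne_of_lt haμ)]
      rw [h0, zero_smul, zero_sub]
      rw [List.erase_cons_tail (by simpa using ne_of_lt haμ)]
      have hc : (a :: t).countP (fun k => decide (k < μ)) =
          t.countP (fun k => decide (k < μ)) + 1 := by
        rw [List.countP_cons]; simp [haμ]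
      rw [hc, List.map_cons, List.prod_cons, pow_succ]
      simp [dt, mul_smul_comm, neg_smul, smul_smul]

lemma sort_erase_eq (n : ℕ) (μ : Fin n) (K : Finset (Fin n)) :
    (K.sort (· ≤ ·)).erase μ = (K.erase μ).sort (· ≤ ·) := by
  refine List.Perm.eq_of_pairwise' ((K.pairwise_sort (· ≤ ·)).erase _) ((K.erase μ).pairwise_sort (· ≤ ·)) ?_
  refine ((K.sort_perm_toList (· ≤ ·)).erase μ).trans ?_
  refine List.Perm.trans ?_ ((K.erase μ).sort_perm_toList (· ≤ ·)).symm
  rw [← Multiset.coe_eq_coe]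
  simp only [Finset.toList, ← Multiset.coe_erase]
  congr 1 <;> simp [Multiset.coe_toList]

lemma countP_sort_eq (n : ℕ) (μ : Fin n) (K : Finset (Fin n)) :
    (K.sort (· ≤ ·)).countP (fun k => decide (k < μ)) = (K.filter (fun k => k < μ)).card := by
  rw [(K.sort_perm_toList (· ≤ ·)).countP_eq, List.countP_eq_length_filter]
  rw [Finset.card_def, Finset.filter_val]
  conv_rhs => rw [← Multiset.coe_toList K.val, Multiset.filter_coe, Multiset.coe_card]
  rfl

lemma contract_dtW (n : ℕ) (μ : Fin n) (K : Finset (Fin n)) :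
    CliffordAlgebra.contractLeft (LinearMap.proj μ : (Fin n → ℂ) →ₗ[ℂ] ℂ) (dtW n K) =
    if μ ∈ K then
      ((-1 : ℂ) ^ (K.filter (fun k => k < μ)).card) • dtW n (K.erase μ)
    else 0 := by
  by_cases h : μ ∈ K
  · rw [if_pos h, dtW, contract_prod_mem n μ _ (K.sortedLT_sort.pairwise) (by simpa using h),
      sort_erase_eq, countP_sort_eq]
    rfl
  · rw [if_neg h, dtW, contract_prod_not_mem n μ _ (by simpa using h)]


set_option maxHeartbeats 1600000 in
theorem stmt11 (n N p : ℕ) (hn : 0 < n) (hp : p + 1 ≤ n)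
    (psym : Fin n → (Fin N → ℤ) → ℂ) (msym : Fin n → ℝ)
    (hsym : ∃ C₀ > (0 : ℝ), ∀ (j : Fin n) (ξ : Fin N → ℤ),
      ‖psym j ξ‖ ≤ C₀ * (1 + ‖ξ‖) ^ (msym j))
    (hdioph : ∃ C > (0 : ℝ), ∃ lam > (0 : ℝ), ∀ (η : Fin n → ℤ) (ξ : Fin N → ℤ),
      (∃ j, ((η j : ℂ) + psym j ξ) ≠ 0) →
      ∃ j, ‖(η j : ℂ) + psym j ξ‖ ≥
        C * ‖((η, ξ) : (Fin n → ℤ) × (Fin N → ℤ))‖ ^ (-lam))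
    (f : (Fin n → ℤ) → (Fin N → ℤ) → Finset (Fin n) → ℂ)
    (hfdec : ∀ M : ℕ, ∃ CM > (0 : ℝ), ∀ η ξ K, ‖f η ξ K‖ ≤
      CM * (1 + ‖((η, ξ) : (Fin n → ℤ) × (Fin N → ℤ))‖) ^ (-(M : ℝ)))
    (Lhat : (Fin n → ℤ) → (Fin N → ℤ) → ExteriorAlgebra ℂ (Fin n → ℂ))
    (hLhat : ∀ η ξ, Lhat η ξ =
      ∑ j : Fin n, (Complex.I * ((η j : ℂ) + psym j ξ)) • dt n j)
    (Fhat : (Fin n → ℤ) → (Fin N → ℤ) → ExteriorAlgebra ℂ (Fin n → ℂ))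
    (hFhat : ∀ η ξ, Fhat η ξ =
      ∑ K ∈ Finset.univ.filter (fun K : Finset (Fin n) => K.card = p + 1),
        f η ξ K • dtW n K)
    (hwedge : ∀ η ξ, Lhat η ξ * Fhat η ξ = 0)
    (μsel : (Fin n → ℤ) → (Fin N → ℤ) → Fin n)
    (hμmax : ∀ η ξ j, ‖(η j : ℂ) + psym j ξ‖ ≤
      ‖(η (μsel η ξ) : ℂ) + psym (μsel η ξ) ξ‖)
    (ucoef : (Fin n → ℤ) → (Fin N → ℤ) → Finset (Fin n) → ℂ)
    (hucoef : ∀ η ξ J, ucoef η ξ J =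
      if μsel η ξ ∈ J then 0 else
        Complex.I⁻¹ * (-1 : ℂ) ^ (J.filter (fun k => k < μsel η ξ)).card *
          ((η (μsel η ξ) : ℂ) + psym (μsel η ξ) ξ)⁻¹ *
            f η ξ (insert (μsel η ξ) J)) :
    (∀ η ξ, Lhat η ξ ≠ 0 →
      Lhat η ξ *
        (∑ J ∈ Finset.univ.filter (fun J : Finset (Fin n) => J.card = p),
          ucoef η ξ J • dtW n J) = Fhat η ξ) ∧
    (∀ M : ℕ, ∃ C' > (0 : ℝ), ∀ η ξ, Lhat η ξ ≠ 0 → ∀ J,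
      ‖ucoef η ξ J‖ ≤
        C' * (1 + ‖((η, ξ) : (Fin n → ℤ) × (Fin N → ℤ))‖) ^ (-(M : ℝ))) := by
  classical
  obtain ⟨C, hC, lam, hlam, hdi⟩ := hdioph
  constructor
  · -- Part 1
    intro η ξ hL
    have haμ : ((η (μsel η ξ) : ℂ) + psym (μsel η ξ) ξ) ≠ 0 := by
      intro h0
      apply hL
      rw [hLhat]
      refine Finset.sum_eq_zero fun j _ => ?_
      have h1 := hμmax η ξ j
      rw [h0] at h1
      simp only [norm_zero] at h1
      have h2 : ((η j : ℂ) + psym j ξ) = 0 :=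
        norm_eq_zero.mp (le_antisymm h1 (norm_nonneg _))
      rw [h2, mul_zero, zero_smul]
    set vL : Fin n → ℂ := fun j => Complex.I * ((η j : ℂ) + psym j ξ) with hvL
    have hLι : Lhat η ξ = ExteriorAlgebra.ι ℂ vL := by
      rw [hLhat]
      have hv : vL = ∑ j : Fin n, (Complex.I * ((η j : ℂ) + psym j ξ)) • (Pi.single j (1 : ℂ) : Fin n → ℂ) := by
        funext k
        simp [hvL, Finset.sum_apply, Pi.single_apply, mul_ite]
      rw [hv, map_sum]
      simp [dt]
    set c : ℂ := Complex.I * ((η (μsel η ξ) : ℂ) + psym (μsel η ξ) ξ) with hc'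
    have hc : c ≠ 0 := mul_ne_zero Complex.I_ne_zero haμ
    set d : (Fin n → ℂ) →ₗ[ℂ] ℂ := LinearMap.proj (μsel η ξ) with hd
    have hkey : ExteriorAlgebra.ι ℂ vL *
        (CliffordAlgebra.contractLeft d (Fhat η ξ)) = c • Fhat η ξ := by
      have h0 := hwedge η ξ
      rw [hLι] at h0
      have h1 := congrArg (CliffordAlgebra.contractLeft d) h0
      rw [map_zero, CliffordAlgebra.contractLeft_ι_mul] at h1
      have h2 : d vL = c := by simp [hd, hvL, hc', LinearMap.proj_apply]
      rw [h2] at h1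
      exact (sub_eq_zero.mp h1).symm
    have hA : (∑ J ∈ Finset.univ.filter (fun J : Finset (Fin n) => J.card = p),
          ucoef η ξ J • dtW n J)
        = ∑ J ∈ (Finset.univ.filter (fun J : Finset (Fin n) => J.card = p)).filter
            (fun J => μsel η ξ ∉ J), ucoef η ξ J • dtW n J := by
      refine (Finset.sum_filter_of_ne ?_).symm
      intro J _ hne hmem
      exact hne (by rw [hucoef, if_pos hmem, zero_smul])
    have hBsum : c⁻¹ • CliffordAlgebra.contractLeft d (Fhat η ξ)
        = ∑ K ∈ (Finset.univ.filter (fun K : Finset (Fin n) => K.card = p + 1)).filter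
              (fun K => μsel η ξ ∈ K),
            (c⁻¹ * (f η ξ K * (-1 : ℂ) ^ (K.filter (fun k => k < μsel η ξ)).card)) •
              dtW n (K.erase (μsel η ξ)) := by
      rw [hFhat η ξ, map_sum, Finset.smul_sum]
      rw [← Finset.sum_filter_of_ne (p := fun K => μsel η ξ ∈ K)
        (fun K _ hne => by
          by_contra hmem
          exact hne (by rw [map_smul, hd, contract_dtW, if_neg hmem, smul_zero, smul_zero]))]
      refine Finset.sum_congr rfl fun K hK => ?_
      rw [map_smul, hd, contract_dtW, if_pos (Finset.mem_filter.mp hK).2, smul_smul, smul_smul,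
        mul_assoc]
    have hU : (∑ J ∈ Finset.univ.filter (fun J : Finset (Fin n) => J.card = p),
          ucoef η ξ J • dtW n J)
        = c⁻¹ • CliffordAlgebra.contractLeft d (Fhat η ξ) := by
      rw [hA, hBsum]
      refine Finset.sum_bij' (fun J _ => insert (μsel η ξ) J) (fun K _ => K.erase (μsel η ξ))
        ?_ ?_ ?_ ?_ ?_
      · intro J hJ
        obtain ⟨hJ1, hJ2⟩ := Finset.mem_filter.mp hJ
        have hcard := (Finset.mem_filter.mp hJ1).2
        refine Finset.mem_filter.mpr ⟨Finset.mem_filter.mpr ⟨Finset.mem_univ _, ?_⟩,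
          Finset.mem_insert_self _ _⟩
        rw [Finset.card_insert_of_notMem hJ2, hcard]
      · intro K hK
        obtain ⟨hK1, hK2⟩ := Finset.mem_filter.mp hK
        have hcard := (Finset.mem_filter.mp hK1).2
        refine Finset.mem_filter.mpr ⟨Finset.mem_filter.mpr ⟨Finset.mem_univ _, ?_⟩,
          Finset.notMem_erase _ _⟩
        rw [Finset.card_erase_of_mem hK2, hcard]
        omega
      · intro J hJ
        exact Finset.erase_insert (Finset.mem_filter.mp hJ).2
      · intro K hK
        exact Finset.insert_erase (Finset.mem_filter.mp hK).2
      · intro J hJ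
        have hJ2 := (Finset.mem_filter.mp hJ).2
        rw [Finset.erase_insert hJ2, Finset.filter_insert, if_neg (lt_irrefl (μsel η ξ))]
        rw [hucoef, if_neg hJ2]
        congr 1
        rw [hc', mul_inv]
        ring
    rw [hU, hLι, mul_smul_comm, hkey, smul_smul, inv_mul_cancel₀ hc, one_smul]
  · -- Part 2
    intro M
    obtain ⟨CM, hCM, hf⟩ := hfdec (M + ⌈lam⌉₊)
    set B : ℝ := (Finset.univ : Finset (Finset (Fin n))).sup' ⟨∅, Finset.mem_univ _⟩
        (fun J => ‖ucoef 0 0 J‖) with hB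
    have hB0 : 0 ≤ B := le_trans (norm_nonneg _)
      (Finset.le_sup' (fun J => ‖ucoef 0 0 J‖) (Finset.mem_univ ∅))
    have hCiCM : 0 < C⁻¹ * CM := mul_pos (inv_pos.mpr hC) hCM
    refine ⟨C⁻¹ * CM + B + 1, by linarith, ?_⟩
    intro η ξ hL J
    have hrp : (0:ℝ) < (1 + ‖((η, ξ) : (Fin n → ℤ) × (Fin N → ℤ))‖) ^ (-(M : ℝ)) :=
      Real.rpow_pos_of_pos (by positivity) _
    by_cases hμJ : μsel η ξ ∈ J
    · rw [hucoef, if_pos hμJ, norm_zero]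
      positivity
    · by_cases hz : η = 0 ∧ ξ = 0
      · obtain ⟨rfl, rfl⟩ := hz
        have hn0 : ‖(((0 : Fin n → ℤ), (0 : Fin N → ℤ)) : (Fin n → ℤ) × (Fin N → ℤ))‖ = 0 :=
          norm_zero
        rw [hn0, add_zero, Real.one_rpow]
        have := Finset.le_sup' (fun J => ‖ucoef 0 0 J‖) (Finset.mem_univ J)
        simp only [← hB] at this
        linarith
      · -- nonzero frequency
        have hz1 : (1:ℝ) ≤ ‖((η, ξ) : (Fin n → ℤ) × (Fin N → ℤ))‖ := by
          rcases not_and_or.mp hz with hη | hξ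
          · obtain ⟨j, hj⟩ : ∃ j, η j ≠ 0 := by
              by_contra h; push_neg at h; exact hη (funext h)
            calc (1:ℝ) ≤ ‖η j‖ := by
                  rw [Int.norm_eq_abs]; exact_mod_cast Int.one_le_abs hj
              _ ≤ ‖η‖ := norm_le_pi_norm η j
              _ ≤ _ := norm_fst_le ((η, ξ) : (Fin n → ℤ) × (Fin N → ℤ))
          · obtain ⟨j, hj⟩ : ∃ j, ξ j ≠ 0 := by
              by_contra h; push_neg at h; exact hξ (funext h)
            calc (1:ℝ) ≤ ‖ξ j‖ := by
                  rw [Int.norm_eq_abs]; exact_mod_cast Int.one_le_abs hj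
              _ ≤ ‖ξ‖ := norm_le_pi_norm ξ j
              _ ≤ _ := norm_snd_le ((η, ξ) : (Fin n → ℤ) × (Fin N → ℤ))
        have hznorm : (0:ℝ) < ‖((η, ξ) : (Fin n → ℤ) × (Fin N → ℤ))‖ := lt_of_lt_of_le one_pos hz1
        have hex : ∃ j, ((η j : ℂ) + psym j ξ) ≠ 0 := by
          by_contra h
          push_neg at h
          apply hL
          rw [hLhat]
          exact Finset.sum_eq_zero fun j _ => by rw [h j, mul_zero, zero_smul]
        obtain ⟨j₀, hj₀⟩ := hdi η ξ hex
        have hlow : C * ‖((η, ξ) : (Fin n → ℤ) × (Fin N → ℤ))‖ ^ (-lam) ≤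
            ‖(η (μsel η ξ) : ℂ) + psym (μsel η ξ) ξ‖ :=
          le_trans hj₀ (hμmax η ξ j₀)
        have hpos : (0:ℝ) < C * ‖((η, ξ) : (Fin n → ℤ) × (Fin N → ℤ))‖ ^ (-lam) :=
          mul_pos hC (Real.rpow_pos_of_pos hznorm _)
        have hinv : (‖(η (μsel η ξ) : ℂ) + psym (μsel η ξ) ξ‖)⁻¹ ≤
            C⁻¹ * ‖((η, ξ) : (Fin n → ℤ) × (Fin N → ℤ))‖ ^ lam := by
          have h1 := inv_anti₀ hpos hlow
          rwa [mul_inv, ← Real.rpow_neg hznorm.le, neg_neg] at h1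
        have habs : ‖ucoef η ξ J‖ =
            (‖(η (μsel η ξ) : ℂ) + psym (μsel η ξ) ξ‖)⁻¹ *
              ‖f η ξ (insert (μsel η ξ) J)‖ := by
          rw [hucoef, if_neg hμJ]
          simp only [norm_mul, norm_inv, norm_pow, Complex.norm_I, norm_neg, norm_one,
            one_pow, inv_one, one_mul, mul_one]
        rw [habs]
        have hfb := hf η ξ (insert (μsel η ξ) J)
        calc (‖(η (μsel η ξ) : ℂ) + psym (μsel η ξ) ξ‖)⁻¹ *
              ‖f η ξ (insert (μsel η ξ) J)‖
            ≤ (C⁻¹ * ‖((η, ξ) : (Fin n → ℤ) × (Fin N → ℤ))‖ ^ lam) *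
              (CM * (1 + ‖((η, ξ) : (Fin n → ℤ) × (Fin N → ℤ))‖) ^ (-((M + ⌈lam⌉₊ : ℕ) : ℝ))) := by
              exact mul_le_mul hinv hfb (norm_nonneg _)
                (mul_nonneg (inv_nonneg.mpr hC.le) (Real.rpow_nonneg (norm_nonneg _) _))
          _ ≤ (C⁻¹ * (1 + ‖((η, ξ) : (Fin n → ℤ) × (Fin N → ℤ))‖) ^ lam) *
              (CM * (1 + ‖((η, ξ) : (Fin n → ℤ) × (Fin N → ℤ))‖) ^ (-((M + ⌈lam⌉₊ : ℕ) : ℝ))) := by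
              gcongr
              linarith
          _ = (C⁻¹ * CM) * (1 + ‖((η, ξ) : (Fin n → ℤ) × (Fin N → ℤ))‖) ^
                (lam + -((M + ⌈lam⌉₊ : ℕ) : ℝ)) := by
              rw [Real.rpow_add (by positivity)]
              ring
          _ ≤ (C⁻¹ * CM) * (1 + ‖((η, ξ) : (Fin n → ℤ) × (Fin N → ℤ))‖) ^ (-(M : ℝ)) := by
              refine mul_le_mul_of_nonneg_left
                (Real.rpow_le_rpow_of_exponent_le (by linarith)
                  (by
                    have hceil := Nat.le_ceil lam
                    push_cast
                    linarith)) hCiCM.le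
          _ ≤ (C⁻¹ * CM + B + 1) * (1 + ‖((η, ξ) : (Fin n → ℤ) × (Fin N → ℤ))‖) ^ (-(M : ℝ)) := by
              refine mul_le_mul_of_nonneg_right (by linarith) (Real.rpow_nonneg (by positivity) _)
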